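/- If ρ ∈ S_r has cycle decomposition into c disjoint cycles of lengths r₁, …, r_c (r₁ + ⋯ + r_c = r), then the full contraction of the invariant tensor Φ(ρ) ∈ E^{⊗r} (E = Mₙ(k), identified with End(V^{⊗r}) via the trace pairing) against matrices X₁, …, X_r is a product of c traces of products of the Xᵢ: concretely, for ρ with cycles (a₁ a₂ ⋯ a_{r₁})(b₁ ⋯ b_{r₂})⋯, the contraction equals Tr(X_{a₁}⋯X_{a_{r₁}})·Tr(X_{b₁}⋯X_{b_{r₂}})⋯. -/

import Mathlib

open PiTensorProduct
open scoped TensorProduct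

/-- The operator `Φ(ρ)` on `V^{⊗ι}` permuting tensor factors according to `ρ`. -/
noncomputable def permTensorMap' (k : Type*) [Field k] (V : Type*) [AddCommGroup V]
    [Module k V] (ι : Type*) [DecidableEq ι] [Fintype ι] (ρ : Equiv.Perm ι) :
    (⨂[k] (_ : ι), V) →ₗ[k] ⨂[k] (_ : ι), V :=
  (PiTensorProduct.reindex k (fun _ : ι => V) ρ).toLinearMap

section aux
variable (k : Type*) [Field k] (n : ℕ) (ι : Type*) [Fintype ι] [DecidableEq ι]

noncomputable def prodML : MultilinearMap k (fun _ : ι => (Fin n → k)) ((ι → Fin n) → k) :=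
  MultilinearMap.pi fun a : ι → Fin n =>
    (MultilinearMap.mkPiAlgebra k ι k).compLinearMap fun i => LinearMap.proj (a i)

@[simp] lemma prodML_apply (v : ι → (Fin n → k)) (a : ι → Fin n) :
    prodML k n ι v a = ∏ i, v i (a i) := by
  simp [prodML]

noncomputable def fwd : (⨂[k] (_ : ι), (Fin n → k)) →ₗ[k] ((ι → Fin n) → k) :=
  PiTensorProduct.lift (prodML k n ι)

@[simp] lemma fwd_tprod (v : ι → (Fin n → k)) (a : ι → Fin n) :
    fwd k n ι (tprod k v) a = ∏ i, v i (a i) := by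
  simp [fwd]

noncomputable def bwd : ((ι → Fin n) → k) →ₗ[k] (⨂[k] (_ : ι), (Fin n → k)) :=
  ∑ a : ι → Fin n, (LinearMap.proj a).smulRight (tprod k (fun i => Pi.single (a i) (1:k)))

lemma bwd_apply (g : (ι → Fin n) → k) :
    bwd k n ι g = ∑ a : ι → Fin n, g a • PiTensorProduct.tprod k (fun i => Pi.single (a i) (1:k)) := by
  simp [bwd, LinearMap.sum_apply]

lemma delta_prod (a a' : ι → Fin n) :
    (∏ i, (Pi.single (a i) (1:k) : Fin n → k) (a' i)) = if a' = a then 1 else 0 := by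
  by_cases h : a' = a
  · subst h; simp
  · obtain ⟨i, hi⟩ := Function.ne_iff.mp h
    rw [if_neg h]
    have h0 : (Pi.single (a i) (1:k) : Fin n → k) (a' i) = 0 := by
      simp [Pi.single_apply, hi]
    exact Finset.prod_eq_zero (Finset.mem_univ i) h0

lemma pi_single_expand (v : Fin n → k) : v = ∑ m, v m • (Pi.single m (1:k) : Fin n → k) := by
  funext j
  simp [Pi.single_apply, Finset.sum_ite_eq]

lemma fwd_bwd : (fwd k n ι) ∘ₗ (bwd k n ι) = LinearMap.id := by
  ext g a
  simp only [LinearMap.comp_apply, bwd_apply, map_sum, map_smul, LinearMap.id_apply]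
  simp only [Finset.sum_apply, Pi.smul_apply, fwd_tprod, smul_eq_mul]
  rw [Finset.sum_congr rfl (fun a' _ => by rw [delta_prod k n ι a' a])]
  simp

lemma bwd_fwd : (bwd k n ι) ∘ₗ (fwd k n ι) = LinearMap.id := by
  apply PiTensorProduct.ext
  refine MultilinearMap.ext fun v => ?_
  show bwd k n ι (fwd k n ι (tprod k v)) = tprod k v
  rw [bwd_apply]
  simp only [fwd_tprod]
  have hv : tprod k v = tprod k (fun i => ∑ m, v i m • (Pi.single m (1:k) : Fin n → k)) := by
    congr 1
    funext i
    exact pi_single_expand k n (v i)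
  conv_rhs => rw [hv, MultilinearMap.map_sum]
  refine Finset.sum_congr rfl fun a _ => ?_
  rw [MultilinearMap.map_smul_univ]

noncomputable def tenEquiv : (⨂[k] (_ : ι), (Fin n → k)) ≃ₗ[k] ((ι → Fin n) → k) :=
  LinearEquiv.ofLinear (fwd k n ι) (bwd k n ι) (fwd_bwd k n ι) (bwd_fwd k n ι)

noncomputable def tenBasis : Module.Basis (ι → Fin n) k (⨂[k] (_ : ι), (Fin n → k)) :=
  Module.Basis.ofEquivFun (tenEquiv k n ι)

lemma tenBasis_apply (a : ι → Fin n) :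
    tenBasis k n ι a = PiTensorProduct.tprod k (fun i => (Pi.single (a i) (1:k) : Fin n → k)) := by
  have h1 : tenBasis k n ι a = (tenEquiv k n ι).symm (Pi.single a 1) :=
    congrFun (Module.Basis.coe_ofEquivFun (tenEquiv k n ι)) a
  rw [h1]
  show bwd k n ι (Pi.single a 1) = _
  rw [bwd_apply]
  simp [Pi.single_apply, Finset.sum_ite_eq]

lemma trace_formula (f : (⨂[k] (_ : ι), (Fin n → k)) →ₗ[k] (⨂[k] (_ : ι), (Fin n → k))) :
    LinearMap.trace k _ f
      = ∑ a : ι → Fin n,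
          fwd k n ι (f (PiTensorProduct.tprod k fun i => (Pi.single (a i) (1:k) : Fin n → k))) a := by
  rw [LinearMap.trace_eq_matrix_trace k (tenBasis k n ι) f, Matrix.trace]
  refine Finset.sum_congr rfl fun a _ => ?_
  rw [Matrix.diag_apply, LinearMap.toMatrix_apply, tenBasis_apply]
  exact Module.Basis.ofEquivFun_repr_apply (tenEquiv k n ι) _ a


section matrixpart
variable {k : Type*} [Field k] {m : ℕ}

lemma ofFn_prod_entry : ∀ (L : ℕ) (A : Fin L → Matrix (Fin m) (Fin m) k) (x y : Fin m),
    (List.ofFn A).prod x y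
      = ∑ q : Fin (L+1) → Fin m,
          if q 0 = x ∧ q (Fin.last L) = y then
            ∏ j : Fin L, A j (q j.castSucc) (q j.succ) else 0
  | 0, A, x, y => by
    have h1 : (List.ofFn A).prod = 1 := by simp
    rw [h1, Matrix.one_apply]
    rw [← Equiv.sum_comp (Equiv.funUnique (Fin 1) (Fin m)).symm
      (fun q : Fin 1 → Fin m => if q 0 = x ∧ q (Fin.last 0) = y then
        ∏ j : Fin 0, A j (q j.castSucc) (q j.succ) else 0)]
    simp only [Equiv.funUnique_symm_apply, Function.const_apply, Fintype.prod_empty]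
    by_cases h : x = y
    · subst h; simp
    · rw [if_neg h]
      refine (Finset.sum_eq_zero fun z _ => ?_).symm
      rw [if_neg]
      rintro ⟨rfl, rfl⟩
      exact h rfl
  | (L+1), A, x, y => by
    have step : (List.ofFn A).prod = A 0 * (List.ofFn (fun j : Fin L => A j.succ)).prod := by
      rw [List.ofFn_succ, List.prod_cons]
    have IH := ofFn_prod_entry L (fun j : Fin L => A j.succ)
    set M : k := ∑ q : Fin (L+1) → Fin m,
      if q (Fin.last L) = y then
        A 0 x (q 0) * ∏ j : Fin L, A j.succ (q j.castSucc) (q j.succ) else 0 with hM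
    have stepA : (List.ofFn A).prod x y = M := by
      rw [step, Matrix.mul_apply]
      calc ∑ z, A 0 x z * (List.ofFn fun j : Fin L => A j.succ).prod z y
          = ∑ z, ∑ q : Fin (L+1) → Fin m,
              if q 0 = z then (if q (Fin.last L) = y then
                A 0 x z * ∏ j : Fin L, A j.succ (q j.castSucc) (q j.succ) else 0) else 0 := by
            refine Finset.sum_congr rfl fun z _ => ?_
            rw [IH z y, Finset.mul_sum]
            refine Finset.sum_congr rfl fun q _ => ?_
            rw [ite_and]
            split_ifs <;> simp
        _ = M := by
            rw [Finset.sum_comm, hM]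
            refine Finset.sum_congr rfl fun q _ => ?_
            rw [Finset.sum_ite_eq Finset.univ (q 0)
              (fun z => if q (Fin.last L) = y then
                A 0 x z * ∏ j : Fin L, A j.succ (q j.castSucc) (q j.succ) else 0)]
            simp
    have hG : ∀ (z : Fin m) (q : Fin (L+1) → Fin m),
        (if (Fin.cons z q : Fin (L+2) → Fin m) 0 = x
            ∧ (Fin.cons z q : Fin (L+2) → Fin m) (Fin.last (L+1)) = y then
          ∏ j : Fin (L+1), A j ((Fin.cons z q : Fin (L+2) → Fin m) j.castSucc)
            ((Fin.cons z q : Fin (L+2) → Fin m) j.succ) else 0)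
        = if z = x then (if q (Fin.last L) = y then
            A 0 z (q 0) * ∏ j : Fin L, A j.succ (q j.castSucc) (q j.succ) else 0) else 0 := by
      intro z q
      rw [ite_and]
      simp only [← Fin.succ_last, Fin.cons_zero, Fin.cons_succ, Fin.prod_univ_succ,
        Fin.castSucc_zero, ← Fin.succ_castSucc]
    have stepB : M = ∑ q : Fin (L+2) → Fin m,
        if q 0 = x ∧ q (Fin.last (L+1)) = y then
          ∏ j : Fin (L+1), A j (q j.castSucc) (q j.succ) else 0 := by
      rw [← Equiv.sum_comp (Fin.consEquiv (fun _ : Fin (L+2) => Fin m))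
        (fun q : Fin (L+2) → Fin m => if q 0 = x ∧ q (Fin.last (L+1)) = y then
          ∏ j : Fin (L+1), A j (q j.castSucc) (q j.succ) else 0), Fintype.sum_prod_type]
      simp only [Fin.consEquiv_apply]
      rw [Finset.sum_congr rfl fun z (_ : z ∈ Finset.univ) =>
        Finset.sum_congr rfl fun q (_ : q ∈ Finset.univ) => hG z q]
      have pull : ∀ z : Fin m,
          (∑ q : Fin (L+1) → Fin m, if z = x then (if q (Fin.last L) = y then
            A 0 z (q 0) * ∏ j : Fin L, A j.succ (q j.castSucc) (q j.succ) else 0) else 0)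
          = if z = x then (∑ q : Fin (L+1) → Fin m, if q (Fin.last L) = y then
            A 0 z (q 0) * ∏ j : Fin L, A j.succ (q j.castSucc) (q j.succ) else 0) else 0 :=
        fun z => by split_ifs <;> simp
      rw [Finset.sum_congr rfl fun z (_ : z ∈ Finset.univ) => pull z,
        Finset.sum_ite_eq' Finset.univ x]
      simp [hM]
    rw [stepA, stepB]

lemma snoc_succ {L : ℕ} (b : Fin (L+1) → Fin m) (j : Fin (L+1)) :
    (Fin.snoc b (b 0) : Fin (L+2) → Fin m) j.succ = b (j + 1) := by
  rcases eq_or_ne j (Fin.last L) with h | h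
  · subst h
    rw [Fin.succ_last, Fin.snoc_last]
    congr 1
    rw [← finRotate_succ_apply, finRotate_last]
  · have hlt : j < Fin.last L := Fin.lt_last_iff_ne_last.mpr h
    have hj : j.succ = (j + 1).castSucc := by
      ext
      simp [Fin.val_add_one_of_lt hlt]
    rw [hj, Fin.snoc_castSucc]

lemma trace_ofFn_prod (L : ℕ) [NeZero L] (A : Fin L → Matrix (Fin m) (Fin m) k) :
    Matrix.trace (List.ofFn A).prod
      = ∑ b : Fin L → Fin m, ∏ j : Fin L, A j (b j) (b (j + 1)) := by
  obtain ⟨L', rfl⟩ : ∃ L'', L = L'' + 1 := ⟨L - 1, (Nat.succ_pred_eq_of_pos (Nat.pos_of_neZero L)).symm⟩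
  rw [Matrix.trace]
  calc ∑ x, (List.ofFn A).prod x x
      = ∑ x, ∑ q : Fin (L'+2) → Fin m,
          if q 0 = x ∧ q (Fin.last (L'+1)) = x then
            ∏ j : Fin (L'+1), A j (q j.castSucc) (q j.succ) else 0 := by
        refine Finset.sum_congr rfl fun x _ => ?_
        rw [ofFn_prod_entry (L'+1) A x x]
    _ = ∑ q : Fin (L'+2) → Fin m,
          if q (Fin.last (L'+1)) = q 0 then
            ∏ j : Fin (L'+1), A j (q j.castSucc) (q j.succ) else 0 := by
        rw [Finset.sum_comm]
        refine Finset.sum_congr rfl fun q _ => ?_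
        rw [Finset.sum_congr rfl fun x (_ : x ∈ Finset.univ) => ite_and _ _ _ _,
          Finset.sum_ite_eq Finset.univ (q 0)]
        simp
    _ = ∑ b : Fin (L'+1) → Fin m, ∏ j : Fin (L'+1), A j (b j) (b (j + 1)) := by
        rw [← Equiv.sum_comp (Fin.snocEquiv (fun _ : Fin (L'+2) => Fin m))
          (fun q : Fin (L'+2) → Fin m => if q (Fin.last (L'+1)) = q 0 then
            ∏ j : Fin (L'+1), A j (q j.castSucc) (q j.succ) else 0), Fintype.sum_prod_type]
        simp only [Fin.snocEquiv_apply]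
        rw [Finset.sum_comm]
        refine Finset.sum_congr rfl fun b _ => ?_
        have hz : ∀ z : Fin m,
            (if (Fin.snoc b z : Fin (L'+2) → Fin m) (Fin.last (L'+1))
                = (Fin.snoc b z : Fin (L'+2) → Fin m) 0 then
              ∏ j : Fin (L'+1), A j ((Fin.snoc b z : Fin (L'+2) → Fin m) j.castSucc)
                ((Fin.snoc b z : Fin (L'+2) → Fin m) j.succ) else 0)
            = if z = b 0 then
              ∏ j : Fin (L'+1), A j ((Fin.snoc b z : Fin (L'+2) → Fin m) j.castSucc)
                ((Fin.snoc b z : Fin (L'+2) → Fin m) j.succ) else 0 := by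
          intro z
          congr 1
          rw [Fin.snoc_last, ← Fin.castSucc_zero, Fin.snoc_castSucc]
        rw [Finset.sum_congr rfl fun z (_ : z ∈ Finset.univ) => hz z,
          Finset.sum_ite_eq' Finset.univ (b 0)]
        simp only [Finset.mem_univ, if_pos]
        refine Finset.prod_congr rfl fun j _ => ?_
        rw [Fin.snoc_castSucc, snoc_succ]
end matrixpart


section cyclepart
variable {k : Type*} [Field k] {n : ℕ}

lemma cycle_trace (L : ℕ) [NeZero L] (Y : Fin L → Module.End k (Fin n → k)) :
    LinearMap.trace k (Fin n → k) (List.ofFn Y).prod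
      = ∑ b : Fin L → Fin n, ∏ j : Fin L,
          (Y j) (Pi.single (b j) (1:k)) (b ((finRotate L)⁻¹ j)) := by
  obtain ⟨L', rfl⟩ : ∃ L'', L = L'' + 1 :=
    ⟨L - 1, (Nat.succ_pred_eq_of_pos (Nat.pos_of_neZero L)).symm⟩
  rw [LinearMap.trace_eq_matrix_trace k (Pi.basisFun k (Fin n)),
    LinearMap.toMatrix_eq_toMatrix']
  have hmap : LinearMap.toMatrix' ((List.ofFn Y).prod)
      = (List.ofFn fun j => LinearMap.toMatrix' (Y j)).prod := by
    have h := map_list_prod (LinearMap.toMatrixAlgEquiv' (R := k) (n := Fin n)) (List.ofFn Y)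
    rw [List.map_ofFn] at h
    exact h
  rw [hmap, trace_ofFn_prod]
  have hentry : ∀ (f : Module.End k (Fin n → k)) (x y : Fin n),
      LinearMap.toMatrix' f x y = f (Pi.single y (1:k)) x := by
    intro f x y
    rw [LinearMap.toMatrix'_apply]
  rw [← Equiv.sum_comp (Equiv.arrowCongr (finRotate (L'+1)).symm (Equiv.refl (Fin n)))
    (fun b : Fin (L'+1) → Fin n => ∏ j : Fin (L'+1),
      (Y j) (Pi.single (b j) (1:k)) (b ((finRotate (L'+1))⁻¹ j)))]
  refine Finset.sum_congr rfl fun b _ => Finset.prod_congr rfl fun j _ => ?_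
  simp only [Equiv.arrowCongr_apply, Equiv.refl_symm, Equiv.coe_refl, Function.comp_apply,
    Equiv.symm_symm, id_eq]
  rw [hentry, Equiv.Perm.inv_def, Equiv.apply_symm_apply, finRotate_succ_apply]
end cyclepart


end aux

/-- If `ρ ∈ S_r` decomposes into `c` disjoint cycles of lengths `L₁, …, L_c`
(here realized canonically on the index set `Σ i : Fin c, Fin (L i)`, the cycles being the
blocks `{i} × Fin (L i)` cyclically rotated), then the full contraction of the invariant
tensor `Φ(ρ) ∈ E^{⊗r}` against matrices `(X_{i,j})` — i.e. the trace pairing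
`Tr_{V^{⊗r}} (Φ(ρ) ∘ (⊗_{i,j} X_{i,j}))` under `E^{⊗r} ≅ End(V^{⊗r})` — equals the product
over the `c` cycles of the traces of the products of the `X`'s along each cycle. -/
theorem stmt_19 (k : Type*) [Field k] [CharZero k] (n c : ℕ) (L : Fin c → ℕ)
    (hL : ∀ i, 0 < L i) (X : (Σ i : Fin c, Fin (L i)) → Module.End k (Fin n → k)) :
    LinearMap.trace k (⨂[k] (_ : Σ i : Fin c, Fin (L i)), (Fin n → k))
        (permTensorMap' k (Fin n → k) (Σ i : Fin c, Fin (L i))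
            (Equiv.sigmaCongrRight fun i => ((finRotate (L i))⁻¹ : Equiv.Perm (Fin (L i))))
          ∘ₗ PiTensorProduct.map X)
      = ∏ i : Fin c,
          LinearMap.trace k (Fin n → k) (List.ofFn fun j : Fin (L i) => X ⟨i, j⟩).prod := by
  classical
  haveI : ∀ i, NeZero (L i) := fun i => ⟨(hL i).ne'⟩
  set ρ : Equiv.Perm (Σ i : Fin c, Fin (L i)) :=
    Equiv.sigmaCongrRight fun i => ((finRotate (L i))⁻¹ : Equiv.Perm (Fin (L i))) with hρ
  rw [trace_formula k n (Σ i : Fin c, Fin (L i))]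
  have hterm : ∀ a : (Σ i : Fin c, Fin (L i)) → Fin n,
      fwd k n _ ((permTensorMap' k (Fin n → k) (Σ i : Fin c, Fin (L i)) ρ
          ∘ₗ PiTensorProduct.map X)
        (tprod k fun s => (Pi.single (a s) (1:k) : Fin n → k))) a
      = ∏ i : Fin c, ∏ j : Fin (L i),
          (X ⟨i,j⟩) (Pi.single (a ⟨i,j⟩) (1:k)) (a ⟨i, (finRotate (L i))⁻¹ j⟩) := by
    intro a
    rw [LinearMap.comp_apply, PiTensorProduct.map_tprod, permTensorMap']
    rw [LinearEquiv.coe_coe, PiTensorProduct.reindex_tprod, fwd_tprod]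
    rw [← Equiv.prod_comp ρ
      (fun t => (X (ρ.symm t)) ((Pi.single (a (ρ.symm t)) (1:k) : Fin n → k)) (a t))]
    simp only [Equiv.symm_apply_apply]
    rw [← Finset.univ_sigma_univ, Finset.prod_sigma]
    refine Finset.prod_congr rfl fun i _ => Finset.prod_congr rfl fun j _ => ?_
    rfl
  rw [Finset.sum_congr rfl fun a _ => hterm a]
  rw [Finset.prod_congr rfl fun i (_ : i ∈ Finset.univ) =>
    cycle_trace (L i) (fun j => X ⟨i, j⟩)]
  rw [Finset.prod_univ_sum]
  rw [← Equiv.sum_comp (Equiv.piCurry (fun (i : Fin c) (_ : Fin (L i)) => Fin n)).symm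
    (fun a : (Σ i : Fin c, Fin (L i)) → Fin n => ∏ i : Fin c, ∏ j : Fin (L i),
      (X ⟨i,j⟩) (Pi.single (a ⟨i,j⟩) (1:k)) (a ⟨i, (finRotate (L i))⁻¹ j⟩))]
  rw [Fintype.piFinset_univ]
  refine Finset.sum_congr rfl fun h _ => Finset.prod_congr rfl fun i _ =>
    Finset.prod_congr rfl fun j _ => rfl
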